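/- Let (X,σ) be an indecomposable solution of multipermutational level at most 2 with abelian permutation group. Then for each x ∈ X and i ∈ ℤ⁺, σ_{σ_x^i(x)} = σ_{σ_x(x)}^i · σ_x^{1-i} (equivalently, writing L_y = σ_y σ_x^{-1}, one has L_{σ_x^i(x)} = L_{σ_x(x)}^i). -/

import Mathlib

/-- in an indecomposable solution of multipermutational level at most 2
with abelian permutation group, `σ_{σ_x^i(x)} = σ_{σ_x(x)}^i σ_x^{1-i}`; equivalently,
writing `L_y = σ_y σ_x⁻¹`, one has `L_{σ_x^i(x)} = L_{σ_x(x)}^i`. -/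
theorem perm_power_formula {X : Type*} (σ : X → Equiv.Perm X)
    (hcc : ∀ x y : X, (σ ((σ x)⁻¹ y))⁻¹ * (σ x)⁻¹ = (σ ((σ y)⁻¹ x))⁻¹ * (σ y)⁻¹)
    (hnd : Function.Bijective fun a : X => (σ a)⁻¹ a)
    (hmp2 : ∀ x y z : X, σ (σ y x) = σ (σ z x))
    (hab : ∀ x y : X, Commute (σ x) (σ y))
    (htr : ∀ x y : X, ∃ g ∈ Subgroup.closure (Set.range σ), g x = y) :
    ∀ (x : X) (i : ℕ), 0 < i →
      σ ((σ x ^ i) x) = (σ (σ x x)) ^ i * (σ x) ^ ((1 : ℤ) - (i : ℤ)) ∧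
      σ ((σ x ^ i) x) * (σ x)⁻¹ = (σ (σ x x) * (σ x)⁻¹) ^ i := by
  -- `τ b := σ (σ b b)`; mp2 says `σ (σ a b) = τ b` for all `a`
  have mp2' : ∀ a b : X, σ (σ a b) = σ (σ b b) := fun a b => hmp2 b a b
  -- inverted cycle-set condition
  have hC : ∀ a b : X, σ a * σ ((σ a)⁻¹ b) = σ b * σ ((σ b)⁻¹ a) := by
    intro a b
    have h := congrArg Inv.inv (hcc a b)
    simpa [mul_inv_rev] using h
  -- (*) : σ ((τ z)⁻¹ a) = (τ z)⁻¹ * (σ a * σ z)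
  have star : ∀ z a : X, σ ((σ (σ z z))⁻¹ a) = (σ (σ z z))⁻¹ * (σ a * σ z) := by
    intro z a
    have h := hC a (σ a z)
    rw [show (σ a)⁻¹ (σ a z) = z from Equiv.symm_apply_apply _ _] at h
    rw [mp2' a z] at h
    rw [h, inv_mul_cancel_left]
  -- (***) : τ ((τ u)⁻¹ a) = (τ u)⁻¹ * (τ a * σ u)
  have tstar : ∀ u a : X,
      σ (σ ((σ (σ u u))⁻¹ a) ((σ (σ u u))⁻¹ a)) = (σ (σ u u))⁻¹ * (σ (σ a a) * σ u) := by
    intro u a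
    have hcm : σ u * (σ (σ u u))⁻¹ = (σ (σ u u))⁻¹ * σ u := ((hab u (σ u u)).inv_right).eq
    have h1 : σ u ((σ (σ u u))⁻¹ a) = (σ (σ u u))⁻¹ (σ u a) := by
      have := congrFun (congrArg (fun g : Equiv.Perm X => (g : X → X)) hcm) a
      simpa using this
    calc σ (σ ((σ (σ u u))⁻¹ a) ((σ (σ u u))⁻¹ a))
        = σ (σ u ((σ (σ u u))⁻¹ a)) := (mp2' u _).symm
      _ = σ ((σ (σ u u))⁻¹ (σ u a)) := by rw [h1]
      _ = (σ (σ u u))⁻¹ * (σ (σ u a) * σ u) := star u (σ u a)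
      _ = (σ (σ u u))⁻¹ * (σ (σ a a) * σ u) := by rw [mp2' u a]
  -- key identity : τ v * σ u = τ u * σ v
  have key : ∀ u v : X, σ (σ v v) * σ u = σ (σ u u) * σ v := by
    intro u v
    have e : ∀ u v : X, σ ((σ (σ u u))⁻¹ (σ v v)) = (σ (σ u u))⁻¹ * (σ (σ v v) * σ u) := by
      intro u v
      have hcm : (σ (σ u u))⁻¹ * σ v = σ v * (σ (σ u u))⁻¹ :=
        (((hab v (σ u u)).inv_right).eq).symm
      have h1 : (σ (σ u u))⁻¹ (σ v v) = σ v ((σ (σ u u))⁻¹ v) := by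
        have := congrFun (congrArg (fun g : Equiv.Perm X => (g : X → X)) hcm) v
        simpa using this
      rw [h1, mp2' v ((σ (σ u u))⁻¹ v), tstar u v]
    have h := hC (σ u u) (σ v v)
    rw [e u v, e v u] at h
    simpa [mul_inv_cancel_left] using h
  -- τ b = L * σ b where L = τ x * (σ x)⁻¹
  have hLb : ∀ x b : X, σ (σ b b) = (σ (σ x x) * (σ x)⁻¹) * σ b := by
    intro x b
    have h := key b x
    have hc : (σ x)⁻¹ * σ b = σ b * (σ x)⁻¹ := (((hab b x).inv_right).eq).symm
    rw [mul_assoc, hc, ← mul_assoc, h, mul_inv_cancel_right]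
  intro x i hi
  have hT : ∀ j : ℕ, σ ((σ x ^ (j + 1)) x) = (σ (σ x x) * (σ x)⁻¹) ^ (j + 1) * σ x := by
    intro j
    induction j with
    | zero => simp [mul_assoc]
    | succ n ih =>
      have hpt : (σ x ^ (n + 1 + 1)) x = σ x ((σ x ^ (n + 1)) x) := by
        rw [pow_succ' (σ x) (n + 1), Equiv.Perm.mul_apply]
      rw [hpt, mp2' x ((σ x ^ (n + 1)) x), hLb x ((σ x ^ (n + 1)) x), ih,
        pow_succ' (σ (σ x x) * (σ x)⁻¹) (n + 1)]
      simp only [mul_assoc]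
  obtain ⟨j, rfl⟩ : ∃ j, i = j + 1 := ⟨i - 1, (Nat.succ_pred_eq_of_pos hi).symm⟩
  constructor
  · rw [hT j]
    have hc : Commute (σ (σ x x)) ((σ x)⁻¹) := (hab (σ x x) x).inv_right
    rw [hc.mul_pow, mul_assoc]
    congr 1
    rw [inv_pow, zpow_sub, zpow_one, zpow_natCast]
    exact (((Commute.refl (σ x)).pow_left (j + 1)).inv_left).eq
  · rw [hT j, mul_inv_cancel_right]
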